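/- Fix p₁ ∈ [0, 1/2] and α ∈ [0, 1/2], and let d be the Hamming distortion on {0,1}. Let p* be the joint pmf on {0,1} × {0,1} with p*(0,0) = p*(1,1) = (1−α)/2 and p*(0,1) = p*(1,0) = α/2, and let c be the binary symmetric channel with crossover probability p₁. Then: (i) min over π : {0,1} → {0,1} of ∑_{u,x} p*(u,x)·d(π(u),x) = α, so p* ∈ P_α := { p : min_{π} ∑_{u,x} p(u,x)·d(π(u),x) ≥ α }; and (ii) the mutual information of the induced pmf q(u,y) = ∑_x p*(u,x)·c(y|x) equals 1 − H_b(p₁ + α(1−2p₁)). Consequently sup_{p ∈ P_α} I(p) ≥ 1 − H_b(p₁ + α(1 − 2p₁)). -/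

import Mathlib

open Finset

/-- Base-2 Shannon entropy of a pmf on a finite set (with 0·log₂0 = 0,
which holds automatically since `Real.logb 2 0 = 0`). -/
noncomputable def ent {S : Type*} [Fintype S] (q : S → ℝ) : ℝ :=
  -∑ s : S, q s * Real.logb 2 (q s)

/-- Mutual information of a pmf on a product of finite sets. -/
noncomputable def mutInfo {A B : Type*} [Fintype A] [Fintype B]
    (q : A × B → ℝ) : ℝ :=
  ent (fun a : A => ∑ b : B, q (a, b)) + ent (fun b : B => ∑ a : A, q (a, b))
    - ent q

/-- The binary entropy function H_b. -/
noncomputable def binEnt (t : ℝ) : ℝ :=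
  -(t * Real.logb 2 t) - (1 - t) * Real.logb 2 (1 - t)



lemma xlogb_half (x : ℝ) : x * Real.logb 2 (x/2) = x * Real.logb 2 x - x := by
  rcases eq_or_ne x 0 with h | h
  · simp [h]
  · rw [Real.logb_div h two_ne_zero, Real.logb_self_eq_one (by norm_num)]
    ring

lemma binEnt_le_one {a : ℝ} (h0 : 0 ≤ a) (h1 : a ≤ 1) : binEnt a ≤ 1 := by
  unfold binEnt
  rcases eq_or_lt_of_le h0 with h | ha0
  · simp [← h]
  rcases eq_or_lt_of_le h1 with h | ha1
  · simp [h]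
  have hb0 : 0 < 1 - a := by linarith
  have l2 : (0:ℝ) < Real.log 2 := Real.log_pos (by norm_num)
  have k1 : Real.log (1/(2*a)) ≤ 1/(2*a) - 1 :=
    Real.log_le_sub_one_of_pos (by positivity)
  have k2 : Real.log (1/(2*(1-a))) ≤ 1/(2*(1-a)) - 1 :=
    Real.log_le_sub_one_of_pos (by positivity)
  have e1 : Real.log (1/(2*a)) = -(Real.log 2 + Real.log a) := by
    rw [one_div, Real.log_inv, Real.log_mul (by norm_num) (ne_of_gt ha0)]
  have e2 : Real.log (1/(2*(1-a))) = -(Real.log 2 + Real.log (1-a)) := by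
    rw [one_div, Real.log_inv, Real.log_mul (by norm_num) (ne_of_gt hb0)]
  rw [e1] at k1; rw [e2] at k2
  have m1 : a * (-(Real.log 2 + Real.log a)) ≤ 1/2 - a := by
    have := mul_le_mul_of_nonneg_left k1 (le_of_lt ha0)
    calc a * (-(Real.log 2 + Real.log a)) ≤ a * (1/(2*a) - 1) := this
      _ = 1/2 - a := by field_simp
  have m2 : (1-a) * (-(Real.log 2 + Real.log (1-a))) ≤ 1/2 - (1-a) := by
    have := mul_le_mul_of_nonneg_left k2 (le_of_lt hb0)
    calc (1-a) * (-(Real.log 2 + Real.log (1-a))) ≤ (1-a) * (1/(2*(1-a)) - 1) := this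
      _ = 1/2 - (1-a) := by field_simp
  have key : -(a * Real.log a) - (1-a) * Real.log (1-a) ≤ Real.log 2 := by nlinarith
  rw [Real.logb, Real.logb]
  calc -(a * (Real.log a / Real.log 2)) - (1 - a) * (Real.log (1-a) / Real.log 2)
      = (-(a * Real.log a) - (1-a) * Real.log (1-a)) / Real.log 2 := by ring
    _ ≤ 1 := by rw [div_le_one l2]; linarith

lemma ent_nonneg {S : Type*} [Fintype S] (q : S → ℝ) (h0 : ∀ s, 0 ≤ q s)
    (h1 : ∑ s : S, q s = 1) : 0 ≤ ent q := by
  unfold ent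
  have : ∑ s : S, q s * Real.logb 2 (q s) ≤ 0 := by
    apply Finset.sum_nonpos
    intro s _
    have hle : q s ≤ 1 := by
      rw [← h1]
      exact Finset.single_le_sum (fun t _ => h0 t) (Finset.mem_univ s)
    exact mul_nonpos_of_nonneg_of_nonpos (h0 s)
      (Real.logb_nonpos (by norm_num) (h0 s) hle)
  linarith

lemma ent_bool_le_one (q : Bool → ℝ) (h0 : ∀ b, 0 ≤ q b)
    (hs : q false + q true = 1) : ent q ≤ 1 := by
  have : ent q = binEnt (q false) := by
    unfold ent binEnt
    have : q true = 1 - q false := by linarith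
    rw [Fintype.sum_bool, this]
    ring
  rw [this]
  exact binEnt_le_one (h0 false) (by have := h0 true; linarith)

/-- achievability of eq. 58: the uniform binary source with
symmetric perturbation α is α-secure under Hamming distortion and achieves
mutual information 1 − H_b(p₁ + α(1−2p₁)) through the BSC(p₁); hence
C^{(I)}(α) ≥ 1 − H_b(p₁ + α(1−2p₁)).
Here {0,1} is modelled by `Bool` with 0 = `false`, 1 = `true`. -/
theorem binary_secure_capacity_achievability
    (p₁ α : ℝ) (hp₁ : p₁ ∈ Set.Icc (0 : ℝ) (1 / 2))
    (hα : α ∈ Set.Icc (0 : ℝ) (1 / 2))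
    (pstar : Bool × Bool → ℝ)
    (hpstar : ∀ u x : Bool,
      pstar (u, x) = if u = x then (1 - α) / 2 else α / 2)
    (c : Bool → Bool → ℝ)
    (hc : ∀ x y : Bool, c x y = if y = x then 1 - p₁ else p₁)
    (Pα : Set (Bool × Bool → ℝ))
    (hPα : Pα = { p : Bool × Bool → ℝ |
      (∀ z : Bool × Bool, 0 ≤ p z) ∧
      (∑ u : Bool, ∑ x : Bool, p (u, x)) = 1 ∧
      α ≤ Finset.univ.inf' Finset.univ_nonempty
            (fun π : Bool → Bool =>
              ∑ u : Bool, ∑ x : Bool,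
                p (u, x) * (if π u = x then (0 : ℝ) else 1)) }) :
    (Finset.univ.inf' Finset.univ_nonempty
        (fun π : Bool → Bool =>
          ∑ u : Bool, ∑ x : Bool,
            pstar (u, x) * (if π u = x then (0 : ℝ) else 1))) = α ∧
    pstar ∈ Pα ∧
    mutInfo (fun uy : Bool × Bool => ∑ x : Bool, pstar (uy.1, x) * c x uy.2)
      = 1 - binEnt (p₁ + α * (1 - 2 * p₁)) ∧
    1 - binEnt (p₁ + α * (1 - 2 * p₁))
      ≤ sSup ((fun p : Bool × Bool → ℝ =>
          mutInfo (fun uy : Bool × Bool =>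
            ∑ x : Bool, p (uy.1, x) * c x uy.2)) '' Pα) := by
  obtain ⟨hp₁0, hp₁2⟩ := hp₁
  obtain ⟨hα0, hα2⟩ := hα
  set β := p₁ + α * (1 - 2 * p₁) with hβ
  have hβ0 : 0 ≤ β := by nlinarith
  have hβ2 : β ≤ 1/2 := by nlinarith
  -- Part 1: inf' = α
  have part1 : (Finset.univ.inf' Finset.univ_nonempty
        (fun π : Bool → Bool =>
          ∑ u : Bool, ∑ x : Bool,
            pstar (u, x) * (if π u = x then (0 : ℝ) else 1))) = α := by
    apply le_antisymm
    · refine (Finset.inf'_le _ (Finset.mem_univ id)).trans_eq ?_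
      simp only [id]
      simp [Fintype.sum_bool, hpstar]
    · apply Finset.le_inf'
      intro π _
      cases hf : π false <;> cases ht : π true <;>
        simp [Fintype.sum_bool, hpstar, hf, ht] <;> linarith
  -- Part 2: membership
  have part2 : pstar ∈ Pα := by
    rw [hPα]
    refine ⟨?_, ?_, part1.ge⟩
    · rintro ⟨u, x⟩
      rw [hpstar]
      split_ifs <;> linarith
    · simp [Fintype.sum_bool, hpstar]
      ring
  -- Part 3: mutInfo value
  have hq : ∀ u y : Bool, (∑ x : Bool, pstar (u, x) * c x y)
      = if u = y then (1 - β)/2 else β/2 := by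
    intro u y
    cases u <;> cases y <;> simp [Fintype.sum_bool, hpstar, hc, hβ] <;> ring
  have hhalf : Real.logb 2 ((1:ℝ)/2) = -1 := by
    rw [show (1:ℝ)/2 = 2⁻¹ by norm_num, Real.logb_inv,
      Real.logb_self_eq_one (by norm_num)]
  have half_xlogb : ∀ x : ℝ, x/2 * Real.logb 2 (x/2)
      = (x * Real.logb 2 x - x)/2 := by
    intro x
    calc x/2 * Real.logb 2 (x/2) = (x * Real.logb 2 (x/2))/2 := by ring
      _ = (x * Real.logb 2 x - x)/2 := by rw [xlogb_half]
  have part3 : mutInfo (fun uy : Bool × Bool =>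
      ∑ x : Bool, pstar (uy.1, x) * c x uy.2) = 1 - binEnt β := by
    unfold mutInfo ent binEnt
    simp only [Fintype.sum_prod_type, Fintype.sum_bool, hq]
    norm_num
    rw [show (1 - β)/2 + β/2 = 1/2 by ring, show β/2 + (1 - β)/2 = 1/2 by ring,
      hhalf, half_xlogb, half_xlogb]
    ring
  refine ⟨part1, part2, part3, ?_⟩
  -- Part 4
  apply le_csSup
  · refine ⟨2, ?_⟩
    rintro _ ⟨p, hp, rfl⟩
    rw [hPα] at hp
    obtain ⟨hnn, hsum, -⟩ := hp
    set q : Bool × Bool → ℝ := fun uy => ∑ x : Bool, p (uy.1, x) * c x uy.2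
      with hqdef
    have hq0 : ∀ z, 0 ≤ q z := by
      rintro ⟨u, y⟩
      apply Finset.sum_nonneg
      intro x _
      apply mul_nonneg (hnn _)
      rw [hc]
      split_ifs <;> linarith
    have hqs : ∑ z : Bool × Bool, q z = 1 := by
      simp only [hqdef, Fintype.sum_prod_type, Fintype.sum_bool, hc] at hsum ⊢
      norm_num
      linarith
    have hq' := hqs
    simp only [Fintype.sum_prod_type, Fintype.sum_bool] at hq'
    have hAB : (∑ b : Bool, q (false, b)) + (∑ b : Bool, q (true, b)) = 1 := by
      simp only [Fintype.sum_bool]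
      linarith
    have hBA : (∑ a : Bool, q (a, false)) + (∑ a : Bool, q (a, true)) = 1 := by
      simp only [Fintype.sum_bool]
      linarith
    have hA : ent (fun a : Bool => ∑ b : Bool, q (a, b)) ≤ 1 :=
      ent_bool_le_one _ (fun b => Finset.sum_nonneg fun y _ => hq0 _) hAB
    have hB : ent (fun b : Bool => ∑ a : Bool, q (a, b)) ≤ 1 :=
      ent_bool_le_one _ (fun b => Finset.sum_nonneg fun y _ => hq0 _) hBA
    have hE : 0 ≤ ent q := ent_nonneg q hq0 hqs
    show mutInfo q ≤ 2
    unfold mutInfo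
    linarith
  · exact ⟨pstar, part2, part3⟩
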